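/- Let f : ℝ^n → ℝ be a continuous piecewise linear function with p affine pieces. Then f can be written as f = g − h, where both g and h are convex continuous piecewise linear functions with at most p^{2n+1} affine pieces each. Concretely, if the pieces of f are x ↦ a_i^T x + b_i for i ∈ [p], one may take h(x) = Σ_{1 ≤ i < j ≤ p} max{a_i^T x + b_i, a_j^T x + b_j} and g = f + h. -/

import Mathlib

/-- A polyhedron: a finite intersection of closed halfspaces. -/
def IsPolyhedron {n : ℕ} (P : Set (Fin n → ℝ)) : Prop :=
  ∃ (m : ℕ) (A : Fin m → Fin n → ℝ) (b : Fin m → ℝ),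
    P = {x | ∀ i, ∑ j, A i j * x j ≤ b i}

/-- `f ∈ CPWL_n`: `f` is continuous and there are finitely many polyhedra covering `ℝⁿ`
such that `f` is affine on each of them. -/
def IsCPWL {n : ℕ} (f : (Fin n → ℝ) → ℝ) : Prop :=
  Continuous f ∧ ∃ (N : ℕ) (P : Fin N → Set (Fin n → ℝ)),
    (∀ i, IsPolyhedron (P i)) ∧ (⋃ i, P i) = Set.univ ∧
    ∀ i, ∃ (a : Fin n → ℝ) (c : ℝ), ∀ x ∈ P i, f x = (∑ j, a j * x j) + c

open Finset

/-- `f` agrees at every point with one of `p` affine functions. -/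
def PiecesLE (n p : ℕ) (f : (Fin n → ℝ) → ℝ) : Prop :=
  ∃ (a : Fin p → Fin n → ℝ) (b : Fin p → ℝ), ∀ x, ∃ i, f x = (∑ t, a i t * x t) + b i



open Finset

/-- evaluation of an affine function at a combination `α • x + β • y` with `α + β = 1`. -/
lemma affEval {n : ℕ} (c : Fin n → ℝ) (r : ℝ) (x y : Fin n → ℝ) (α β : ℝ) (hab : α + β = 1) :
    (∑ t, c t * (α • x + β • y) t) + r
      = α * ((∑ t, c t * x t) + r) + β * ((∑ t, c t * y t) + r) := by
  have h1 : (∑ t, c t * (α • x + β • y) t)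
      = α * (∑ t, c t * x t) + β * (∑ t, c t * y t) := by
    rw [Finset.mul_sum, Finset.mul_sum, ← Finset.sum_add_distrib]
    refine Finset.sum_congr rfl fun t _ => ?_
    simp [Pi.add_apply, Pi.smul_apply, smul_eq_mul]; ring
  rw [h1]; linear_combination (-r) * hab

lemma affCont {n : ℕ} (c : Fin n → ℝ) (r : ℝ) :
    Continuous fun x : Fin n → ℝ => (∑ t, c t * x t) + r := by
  exact (continuous_finset_sum _ fun t _ => (continuous_const.mul (continuous_apply t))).add
    continuous_const

/-- A continuous function on ℝ which is locally affine on both sides of every point,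
with left slope ≤ right slope, is convex (chord inequality form). -/
lemma oneD_convex (Φ : ℝ → ℝ) (hc : Continuous Φ)
    (hloc : ∀ t : ℝ, ∃ ε > 0, ∃ ρL ρR : ℝ, ρL ≤ ρR ∧
      (∀ u, t - ε ≤ u → u ≤ t → Φ u = Φ t + ρL * (u - t)) ∧
      (∀ u, t ≤ u → u ≤ t + ε → Φ u = Φ t + ρR * (u - t))) :
    ∀ a b θ : ℝ, 0 ≤ θ → θ ≤ 1 → Φ ((1-θ)*a + θ*b) ≤ (1-θ) * Φ a + θ * Φ b := by
  -- first prove it for a < b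
  have main : ∀ a b θ : ℝ, a < b → 0 ≤ θ → θ ≤ 1 →
      Φ ((1-θ)*a + θ*b) ≤ (1-θ) * Φ a + θ * Φ b := by
    intro a b θ hab hθ0 hθ1
    set γ : ℝ := (Φ b - Φ a)/(b - a) with hγ
    have hba : b - a ≠ 0 := by linarith
    set ψ : ℝ → ℝ := fun t => Φ t - (Φ a + γ * (t - a)) with hψ
    have hψc : Continuous ψ := by fun_prop
    have hψa : ψ a = 0 := by simp [hψ]
    have hψb : ψ b = 0 := by simp only [hψ, hγ]; rw [div_mul_cancel₀ _ hba]; ring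
    -- suffices : ψ ≤ 0 on [a,b]
    have key : ∀ u ∈ Set.Icc a b, ψ u ≤ 0 := by
      by_contra hcon
      push_neg at hcon
      obtain ⟨u₀, hu₀, hu₀pos⟩ := hcon
      obtain ⟨t₁, ht₁mem, ht₁max⟩ := (isCompact_Icc (a := a) (b := b)).exists_isMaxOn
        (Set.nonempty_Icc.2 hab.le) hψc.continuousOn
      set M := ψ t₁ with hM
      have hMpos : 0 < M := lt_of_lt_of_le hu₀pos (ht₁max hu₀)
      set K := {t ∈ Set.Icc a b | ψ t = M} with hK
      have hKc : IsClosed K := by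
        have : K = Set.Icc a b ∩ ψ ⁻¹' {M} := by ext t; exact Iff.rfl
        rw [this]; exact isClosed_Icc.inter (isClosed_singleton.preimage hψc)
      have hKne : K.Nonempty := ⟨t₁, ht₁mem, rfl⟩
      have hKbdd : BddAbove K := ⟨b, fun t ht => ht.1.2⟩
      set ts := sSup K with hts
      have htsK : ts ∈ K := hKc.csSup_mem hKne hKbdd
      obtain ⟨htsI, htsM⟩ := htsK
      have htsa : a < ts := by
        rcases eq_or_lt_of_le htsI.1 with hh | hh
        · exfalso; rw [← hh] at htsM; rw [hψa] at htsM; linarith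
        · exact hh
      have htsb : ts < b := by
        rcases eq_or_lt_of_le htsI.2 with hh | hh
        · exfalso; rw [hh] at htsM; rw [hψb] at htsM; linarith
        · exact hh
      obtain ⟨ε, hε, ρL, ρR, hρ, hL, hR⟩ := hloc ts
      -- right side
      set εR := min ε (b - ts) with hεR
      have hεRpos : 0 < εR := lt_min hε (by linarith)
      have hu : Φ (ts + εR) = Φ ts + ρR * εR := by
        have := hR (ts + εR) (by linarith) (by rw [hεR]; linarith [min_le_left ε (b - ts)])
        simpa using this
      have hmem : ts + εR ∈ Set.Icc a b :=
        ⟨by linarith, by linarith [min_le_right ε (b - ts)]⟩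
      have hlt : ψ (ts + εR) < M := by
        rcases lt_or_eq_of_le (show ψ (ts + εR) ≤ M from ht₁max hmem) with hh | hh
        · exact hh
        · exfalso
          have : ts + εR ∈ K := ⟨hmem, hh⟩
          have := le_csSup hKbdd this
          linarith
      have hρR : ρR < γ := by
        have hψu : ψ (ts + εR) = M + (ρR - γ) * εR := by
          simp only [hψ] at htsM ⊢
          rw [hu]; ring_nf; ring_nf at htsM; linarith
        rw [hψu] at hlt; nlinarith
      -- left side
      set εL := min ε (ts - a) with hεL
      have hεLpos : 0 < εL := lt_min hε (by linarith)
      have hu' : Φ (ts - εL) = Φ ts - ρL * εL := by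
        have := hL (ts - εL) (by rw [hεL]; linarith [min_le_left ε (ts - a)]) (by linarith)
        rw [this]; ring
      have hmem' : ts - εL ∈ Set.Icc a b :=
        ⟨by linarith [min_le_right ε (ts - a)], by linarith⟩
      have hle : ψ (ts - εL) ≤ M := ht₁max hmem'
      have hρL : γ ≤ ρL := by
        have hψu' : ψ (ts - εL) = M + (γ - ρL) * εL := by
          simp only [hψ] at htsM ⊢
          rw [hu']; ring_nf; ring_nf at htsM; linarith
        rw [hψu'] at hle; nlinarith
      linarith
    -- now conclude
    have hmem : (1-θ)*a + θ*b ∈ Set.Icc a b := by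
      constructor <;> nlinarith
    have := key _ hmem
    have hchord : Φ a + γ * ((1-θ)*a + θ*b - a) = (1-θ) * Φ a + θ * Φ b := by
      have hγm : γ * (b - a) = Φ b - Φ a := by rw [hγ]; exact div_mul_cancel₀ _ hba
      linear_combination θ * hγm
    simp only [hψ] at this
    linarith [this, hchord.symm.le]
  intro a b θ hθ0 hθ1
  rcases lt_trichotomy a b with hab | hab | hab
  · exact main a b θ hab hθ0 hθ1
  · subst hab
    have : (1-θ)*a + θ*a = a := by ring
    rw [this]; linarith
  · have := main b a (1-θ) hab (by linarith) (by linarith)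
    have h1 : (1-(1-θ))*b + (1-θ)*a = (1-θ)*a + θ*b := by ring
    rw [h1] at this; linarith



lemma affEval' {n : ℕ} (c : Fin n → ℝ) (r : ℝ) (x y : Fin n → ℝ) (α β : ℝ) (hab : α + β = 1) :
    (∑ t, c t * (α • x + β • y) t) + r
      = α * ((∑ t, c t * x t) + r) + β * ((∑ t, c t * y t) + r) := by
  have h1 : (∑ t, c t * (α • x + β • y) t)
      = α * (∑ t, c t * x t) + β * (∑ t, c t * y t) := by
    rw [Finset.mul_sum, Finset.mul_sum, ← Finset.sum_add_distrib]
    refine Finset.sum_congr rfl fun t _ => ?_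
    simp [Pi.add_apply, Pi.smul_apply, smul_eq_mul]; ring
  rw [h1]; linear_combination (-r) * hab

/-- the weak sign pattern of a family of `m` affine functions at `x`. -/
noncomputable def pat {n m : ℕ} (c : Fin m → Fin n → ℝ) (r : Fin m → ℝ) (x : Fin n → ℝ) :
    Fin m → Bool := fun k => decide (0 ≤ (∑ t, c k t * x t) + r k)

lemma update_sum {n : ℕ} (v z : Fin n → ℝ) (j : Fin n) :
    ∑ t, v t * (Function.update z j 0) t = (∑ t, v t * z t) - v j * z j := by
  have h : (fun t => v t * (Function.update z j 0) t)
      = Function.update (fun t => v t * z t) j 0 := by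
    funext t
    by_cases ht : t = j
    · subst ht; simp [Function.update_self]
    · simp [Function.update_of_ne ht]
  rw [h, Finset.sum_update_of_mem (Finset.mem_univ j)]
  rw [Finset.sum_sdiff_eq_sub (Finset.singleton_subset_iff.mpr (Finset.mem_univ j))]
  rw [Finset.sum_singleton]
  ring

lemma zero_comb (A B : ℝ) (hA : A < 0) (hB : 0 ≤ B) :
    ∃ θ : ℝ, 0 ≤ θ ∧ θ ≤ 1 ∧ (1-θ)*A + θ*B = 0 := by
  refine ⟨(-A)/(B-A), div_nonneg (by linarith) (by linarith), ?_, ?_⟩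
  · rw [div_le_one (by linarith : (0:ℝ) < B - A)]; linarith
  · have hne : B - A ≠ 0 := by linarith
    field_simp [hne]
    ring

lemma signCount : ∀ (m : ℕ) {n : ℕ} (T : Finset (Fin n)) (c : Fin m → Fin n → ℝ)
    (r : Fin m → ℝ), (∀ k t, t ∉ T → c k t = 0) →
    (Set.range (pat c r)).ncard ≤ (m+1) ^ T.card := by
  intro m
  induction m with
  | zero =>
    intro n T c r _
    have hsub : (Set.range (pat c r)).Subsingleton := by
      intro s _ s' _
      funext k; exact absurd k.2 (by omega)
    calc (Set.range (pat c r)).ncard ≤ 1 :=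
          (Set.ncard_le_one (Set.toFinite _)).2 fun s _ s' _ => hsub ‹_› ‹_›
      _ ≤ (0+1) ^ T.card := by simp
  | succ m IH =>
    intro n T c r hT
    set d : Fin (m+1) → (Fin n → ℝ) → ℝ := fun k x => (∑ t, c k t * x t) + r k with hd
    set c' : Fin m → Fin n → ℝ := fun k => c k.castSucc with hc'
    set r' : Fin m → ℝ := fun k => r k.castSucc with hr'
    set π : (Fin (m+1) → Bool) → (Fin m → Bool) := fun s k => s k.castSucc with hπ
    have hπpat : ∀ x, π (pat c r x) = pat c' r' x := fun x => rfl
    have hT' : ∀ (k : Fin m) t, t ∉ T → c' k t = 0 := fun k t ht => hT _ t ht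
    by_cases hlin : ∀ t, c (Fin.last m) t = 0
    · -- last function is constant : last bit of every realized pattern is fixed
      have hconst : ∀ x, pat c r x (Fin.last m) = decide (0 ≤ r (Fin.last m)) := by
        intro x
        have : (∑ t, c (Fin.last m) t * x t) = 0 :=
          Finset.sum_eq_zero fun t _ => by rw [hlin t]; ring
        simp [pat, this]
      have hinj : Set.InjOn π (Set.range (pat c r)) := by
        rintro s1 ⟨x1, rfl⟩ s2 ⟨x2, rfl⟩ hπeq
        funext k
        refine Fin.lastCases ?_ (fun i => ?_) k
        · rw [hconst, hconst]
        · exact congrFun hπeq i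
      have himg : π '' (Set.range (pat c r)) = Set.range (pat c' r') := by
        ext s'; constructor
        · rintro ⟨s, ⟨x, rfl⟩, rfl⟩; exact ⟨x, (hπpat x).symm⟩
        · rintro ⟨x, rfl⟩; exact ⟨pat c r x, ⟨x, rfl⟩, hπpat x⟩
      calc (Set.range (pat c r)).ncard = (π '' (Set.range (pat c r))).ncard :=
            (Set.ncard_image_of_injOn hinj).symm
        _ = (Set.range (pat c' r')).ncard := by rw [himg]
        _ ≤ (m+1) ^ T.card := IH T c' r' hT'
        _ ≤ (m+1+1) ^ T.card := Nat.pow_le_pow_left (by omega) _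
    · push_neg at hlin
      obtain ⟨j, hj⟩ := hlin
      have hjT : j ∈ T := by by_contra hjT; exact hj (hT _ j hjT)
      set St := Set.range (pat c r) ∩ {s | s (Fin.last m) = true} with hSt
      set Sf := Set.range (pat c r) ∩ {s | s (Fin.last m) = false} with hSf
      have hsplit : Set.range (pat c r) = St ∪ Sf := by
        ext s; simp only [hSt, hSf, Set.mem_union, Set.mem_inter_iff, Set.mem_setOf_eq]
        rcases Bool.eq_false_or_eq_true (s (Fin.last m)) with hb | hb <;> tauto
      have hinjt : Set.InjOn π St := by
        rintro s1 ⟨hs1, hb1⟩ s2 ⟨hs2, hb2⟩ hπeq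
        funext k
        refine Fin.lastCases ?_ (fun i => ?_) k
        · simp only [Set.mem_setOf_eq] at hb1 hb2; rw [hb1, hb2]
        · exact congrFun hπeq i
      have hinjf : Set.InjOn π Sf := by
        rintro s1 ⟨hs1, hb1⟩ s2 ⟨hs2, hb2⟩ hπeq
        funext k
        refine Fin.lastCases ?_ (fun i => ?_) k
        · simp only [Set.mem_setOf_eq] at hb1 hb2; rw [hb1, hb2]
        · exact congrFun hπeq i
      have hsub : π '' St ∪ π '' Sf ⊆ Set.range (pat c' r') := by
        rintro s' (⟨s, ⟨⟨x, rfl⟩, _⟩, rfl⟩ | ⟨s, ⟨⟨x, rfl⟩, _⟩, rfl⟩) <;> exact ⟨x, (hπpat x).symm⟩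
      -- the intersection embeds in the patterns on the hyperplane
      set cl : Fin n → ℝ := c (Fin.last m) with hcl
      set rl : ℝ := r (Fin.last m) with hrl
      set c'' : Fin m → Fin n → ℝ :=
        fun k t => c' k t - c' k j * cl t / cl j with hc''
      set r'' : Fin m → ℝ := fun k => r' k - c' k j * rl / cl j with hr''
      have hT'' : ∀ (k : Fin m) t, t ∉ T.erase j → c'' k t = 0 := by
        intro k t ht
        rw [Finset.mem_erase] at ht
        push_neg at ht
        by_cases htj : t = j
        · subst htj; simp only [hc'']; field_simp; simp
        · have h1 : c' k t = 0 := hT _ t (ht htj)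
          have h2 : cl t = 0 := hT _ t (ht htj)
          simp [hc'', h1, h2]
      have hinter : π '' St ∩ π '' Sf ⊆ Set.range (pat c'' r'') := by
        rintro s' ⟨⟨s1, ⟨⟨xp, rfl⟩, hb1⟩, hπ1⟩, ⟨s2, ⟨⟨xm, rfl⟩, hb2⟩, hπ2⟩⟩
        simp only [Set.mem_setOf_eq] at hb1 hb2
        have hxp : 0 ≤ d (Fin.last m) xp := by
          have := hb1; simp only [pat, decide_eq_true_eq] at this; exact this
        have hxm : d (Fin.last m) xm < 0 := by
          have := hb2; simp only [pat, decide_eq_false_iff_not] at this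
          exact not_le.mp this
        have hpk : ∀ k : Fin m, s' k = decide (0 ≤ d k.castSucc xp) := by
          intro k; rw [← hπ1]; rfl
        have hmk : ∀ k : Fin m, s' k = decide (0 ≤ d k.castSucc xm) := by
          intro k; rw [← hπ2]; rfl
        -- the zero of the last function on the segment [xm, xp]
        obtain ⟨θ, hθ0, hθ1, hθz⟩ := zero_comb (d (Fin.last m) xm) (d (Fin.last m) xp) hxm hxp
        set z := (1-θ) • xm + θ • xp with hz
        have hcomb : ∀ k : Fin (m+1), d k z = (1-θ) * d k xm + θ * d k xp := by
          intro k
          exact affEval' (c k) (r k) xm xp (1-θ) θ (by ring)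
        have hzlast : d (Fin.last m) z = 0 := by rw [hcomb]; exact hθz
        have hvp : ∀ k : Fin m, s' k = true ↔ 0 ≤ d k.castSucc xp := by
          intro k; rw [hpk k]; simp
        have hvm : ∀ k : Fin m, s' k = true ↔ 0 ≤ d k.castSucc xm := by
          intro k; rw [hmk k]; simp
        have hzpat : ∀ k : Fin m, decide (0 ≤ d k.castSucc z) = s' k := by
          intro k
          have hcz := hcomb k.castSucc
          cases hb : s' k with
          | true =>
            have h1 : 0 ≤ d k.castSucc xp := (hvp k).1 hb
            have h2 : 0 ≤ d k.castSucc xm := (hvm k).1 hb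
            have hge : 0 ≤ d k.castSucc z := by rw [hcz]; nlinarith
            simp [hge]
          | false =>
            have h1 : ¬ (0 ≤ d k.castSucc xp) := by rw [← hvp k]; simp [hb]
            have h2 : ¬ (0 ≤ d k.castSucc xm) := by rw [← hvm k]; simp [hb]
            push_neg at h1 h2
            have hlt : d k.castSucc z < 0 := by
              rw [hcz]
              rcases eq_or_lt_of_le hθ0 with hh | hh
              · rw [← hh]; simpa using h2
              · nlinarith
            simp [not_le.mpr hlt]
        -- now move to the hyperplane coordinates
        set w := Function.update z j 0 with hw
        have hkey : ∀ k : Fin m, (∑ t, c'' k t * w t) + r'' k = d k.castSucc z := by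
          intro k
          have hdk : d k.castSucc z = (∑ t, c' k t * z t) + r' k := rfl
          have e1 : (∑ t, c'' k t * w t)
              = (∑ t, c' k t * (Function.update z j 0) t)
                - (c' k j / cl j) * (∑ t, cl t * (Function.update z j 0) t) := by
            rw [hw, Finset.mul_sum, ← Finset.sum_sub_distrib]
            refine Finset.sum_congr rfl fun t _ => ?_
            simp only [hc'']
            field_simp
          have e2 := update_sum (c' k) z j
          have e3 := update_sum cl z j
          have hz2 : (∑ t, cl t * z t) = - rl := by
            have h0 := hzlast
            have hdz : d (Fin.last m) z = (∑ t, cl t * z t) + rl := rfl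
            rw [hdz] at h0; linarith
          have hrk : r'' k = r' k - c' k j * rl / cl j := rfl
          rw [e1, e2, e3, hz2, hdk, hrk]
          field_simp
          ring
        refine ⟨w, ?_⟩
        funext k
        rw [← hzpat k]
        simp only [pat]
        rw [hkey k]
      -- cardinality bookkeeping
      have hfin' : ∀ s : Set (Fin m → Bool), s.Finite := fun s => s.toFinite
      have hiu : (π '' St ∩ π '' Sf).ncard + (π '' St ∪ π '' Sf).ncard
          = (π '' St).ncard + (π '' Sf).ncard :=
        Set.ncard_inter_add_ncard_union _ _ (hfin' _) (hfin' _)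
      have h1 : (Set.range (pat c r)).ncard ≤ St.ncard + Sf.ncard := by
        rw [hsplit]; exact Set.ncard_union_le _ _
      have h2 : St.ncard = (π '' St).ncard := (Set.ncard_image_of_injOn hinjt).symm
      have h3 : Sf.ncard = (π '' Sf).ncard := (Set.ncard_image_of_injOn hinjf).symm
      have h4 : (π '' St ∪ π '' Sf).ncard ≤ (m+1) ^ T.card :=
        le_trans (Set.ncard_le_ncard hsub (hfin' _)) (IH T c' r' hT')
      have h5 : (π '' St ∩ π '' Sf).ncard ≤ (m+1) ^ (T.erase j).card :=
        le_trans (Set.ncard_le_ncard hinter (hfin' _)) (IH (T.erase j) c'' r'' hT'')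
      have hcard : (T.erase j).card = T.card - 1 := Finset.card_erase_of_mem hjT
      obtain ⟨A', hA'⟩ : ∃ A', T.card = A' + 1 :=
        ⟨T.card - 1, (Nat.succ_pred_eq_of_pos (Finset.card_pos.2 ⟨j, hjT⟩)).symm⟩
      have harith : (m+1) ^ T.card + (m+1) ^ (T.card - 1) ≤ (m+1+1) ^ T.card := by
        rw [hA']
        simp only [Nat.add_sub_cancel]
        calc (m+1) ^ (A'+1) + (m+1) ^ A' = (m+2) * (m+1) ^ A' := by ring
          _ ≤ (m+2) * (m+2) ^ A' :=
              Nat.mul_le_mul_left _ (Nat.pow_le_pow_left (by omega) _)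
          _ = (m+1+1) ^ (A'+1) := by ring
      calc (Set.range (pat c r)).ncard ≤ St.ncard + Sf.ncard := h1
        _ = (π '' St).ncard + (π '' Sf).ncard := by rw [h2, h3]
        _ = (π '' St ∩ π '' Sf).ncard + (π '' St ∪ π '' Sf).ncard := hiu.symm
        _ ≤ (m+1) ^ (T.card - 1) + (m+1) ^ T.card := add_le_add (hcard ▸ h5) h4
        _ = (m+1) ^ T.card + (m+1) ^ (T.card - 1) := add_comm _ _
        _ ≤ (m+1+1) ^ T.card := harith

section C
variable {n p : ℕ}

/-- affine function given by coefficients -/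
def aff {n : ℕ} (c : Fin n → ℝ) (r : ℝ) (x : Fin n → ℝ) : ℝ := (∑ t, c t * x t) + r

lemma affEval2 {n : ℕ} (c : Fin n → ℝ) (r : ℝ) (x y : Fin n → ℝ) (α β : ℝ) (hab : α + β = 1) :
    aff c r (α • x + β • y) = α * aff c r x + β * aff c r y := by
  have h1 : (∑ t, c t * (α • x + β • y) t)
      = α * (∑ t, c t * x t) + β * (∑ t, c t * y t) := by
    rw [Finset.mul_sum, Finset.mul_sum, ← Finset.sum_add_distrib]
    refine Finset.sum_congr rfl fun t _ => ?_
    simp [Pi.add_apply, Pi.smul_apply, smul_eq_mul]; ring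
  simp only [aff]; rw [h1]; linear_combination (-r) * hab

lemma aff_continuous {n : ℕ} (c : Fin n → ℝ) (r : ℝ) : Continuous (aff c r) :=
  (continuous_finset_sum _ fun t _ => (continuous_const.mul (continuous_apply t))).add
    continuous_const

lemma aff_convexOn {n : ℕ} (c : Fin n → ℝ) (r : ℝ) : ConvexOn ℝ Set.univ (aff c r) :=
  ⟨convex_univ, fun x _ y _ α β hα hβ hab => by
    rw [affEval2 c r x y α β hab, smul_eq_mul, smul_eq_mul]⟩

lemma max_aff_convexOn {n : ℕ} (c1 c2 : Fin n → ℝ) (r1 r2 : ℝ) :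
    ConvexOn ℝ Set.univ (fun x => max (aff c1 r1 x) (aff c2 r2 x)) := by
  have := (aff_convexOn c1 r1).sup (aff_convexOn c2 r2)
  have heq : (aff c1 r1 ⊔ aff c2 r2) = fun x => max (aff c1 r1 x) (aff c2 r2 x) := by
    funext x; simp [Pi.sup_apply]
  rwa [heq] at this

lemma convexOn_finset_sum {α : Type*} [AddCommGroup α] [Module ℝ α] {ι : Type*}
    (F : Finset ι) (f : ι → α → ℝ) (hf : ∀ i ∈ F, ConvexOn ℝ Set.univ (f i)) :
    ConvexOn ℝ Set.univ (fun x => ∑ i ∈ F, f i x) := by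
  classical
  induction F using Finset.induction with
  | empty => simpa using convexOn_const 0 convex_univ
  | insert a F' ha IH =>
    have h1 := hf a (Finset.mem_insert_self a F')
    have h2 := IH (fun i hi => hf i (Finset.mem_insert_of_mem hi))
    have := h1.add h2
    have heq : (f a + fun x => ∑ i ∈ F', f i x) = fun x => ∑ i ∈ insert a F', f i x := by
      funext x; simp [Finset.sum_insert ha]
    rwa [heq] at this

/-- the set of ordered pairs of pieces -/
def pairsF (p : ℕ) : Finset (Fin p × Fin p) :=
  Finset.univ.filter (fun q : Fin p × Fin p => q.1 < q.2)

lemma hFun_convexOn (a : Fin p → Fin n → ℝ) (b : Fin p → ℝ) :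
    ConvexOn ℝ Set.univ (fun x =>
      ∑ q ∈ pairsF p, max (aff (a q.1) (b q.1) x) (aff (a q.2) (b q.2) x)) :=
  convexOn_finset_sum _ _ (fun q _ => max_aff_convexOn _ _ _ _)

lemma isPolyhedron_inter {P Q : Set (Fin n → ℝ)} (hP : IsPolyhedron P) (hQ : IsPolyhedron Q) :
    IsPolyhedron (P ∩ Q) := by
  obtain ⟨m1, A1, b1, rfl⟩ := hP
  obtain ⟨m2, A2, b2, rfl⟩ := hQ
  refine ⟨m1 + m2, Fin.append A1 A2, Fin.append b1 b2, ?_⟩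
  ext x
  simp only [Set.mem_inter_iff, Set.mem_setOf_eq]
  constructor
  · rintro ⟨h1, h2⟩ i
    refine Fin.addCases (fun i => ?_) (fun i => ?_) i
    · simpa [Fin.append_left] using h1 i
    · simpa [Fin.append_right] using h2 i
  · intro hx
    constructor
    · intro i; simpa [Fin.append_left] using hx (Fin.castAdd m2 i)
    · intro i; simpa [Fin.append_right] using hx (Fin.natAdd m1 i)

/-- the (weak) region associated with a sign pattern `s` -/
def Rset (a : Fin p → Fin n → ℝ) (b : Fin p → ℝ) (s : Fin p × Fin p → Bool) :
    Set (Fin n → ℝ) :=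
  {x | ∀ q ∈ pairsF p, if s q then aff (a q.2) (b q.2) x ≤ aff (a q.1) (b q.1) x
    else aff (a q.1) (b q.1) x ≤ aff (a q.2) (b q.2) x}

lemma sub_aff (c1 c2 : Fin n → ℝ) (r1 r2 : ℝ) (x : Fin n → ℝ) :
    aff c1 r1 x - aff c2 r2 x = (∑ t, (c1 t - c2 t) * x t) + (r1 - r2) := by
  simp only [aff]
  rw [show (fun t => (c1 t - c2 t) * x t) = fun t => c1 t * x t - c2 t * x t from
    funext fun t => by ring]
  rw [Finset.sum_sub_distrib]
  ring

lemma isPolyhedron_Rset (a : Fin p → Fin n → ℝ) (b : Fin p → ℝ) (s : Fin p × Fin p → Bool) :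
    IsPolyhedron (Rset a b s) := by
  classical
  set m := (pairsF p).card with hm
  set e := (pairsF p).equivFin.symm with he
  refine ⟨m, fun i t => if s (e i).1 then a (e i).1.2 t - a (e i).1.1 t
      else a (e i).1.1 t - a (e i).1.2 t,
    fun i => if s (e i).1 then b (e i).1.1 - b (e i).1.2 else b (e i).1.2 - b (e i).1.1, ?_⟩
  ext x
  simp only [Rset, Set.mem_setOf_eq]
  constructor
  · intro hx i
    have hq := hx (e i).1 (e i).2
    by_cases hs : s (e i).1
    · rw [if_pos hs] at hq
      simp only [if_pos hs]
      have := sub_aff (a (e i).1.2) (a (e i).1.1) (b (e i).1.2) (b (e i).1.1) x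
      simp only [aff] at this hq ⊢
      linarith
    · rw [if_neg hs] at hq
      simp only [if_neg hs]
      have := sub_aff (a (e i).1.1) (a (e i).1.2) (b (e i).1.1) (b (e i).1.2) x
      simp only [aff] at this hq ⊢
      linarith
  · intro hx q hq
    have hi := hx (e.symm ⟨q, hq⟩)
    rw [Equiv.apply_symm_apply] at hi
    by_cases hs : s q
    · rw [if_pos hs]
      simp only [if_pos hs] at hi
      have := sub_aff (a q.2) (a q.1) (b q.2) (b q.1) x
      simp only [aff] at this hi ⊢
      linarith
    · rw [if_neg hs]
      simp only [if_neg hs] at hi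
      have := sub_aff (a q.1) (a q.2) (b q.1) (b q.2) x
      simp only [aff] at this hi ⊢
      linarith

/-- every point belongs to the region of its own sign pattern -/
lemma mem_Rset_self (a : Fin p → Fin n → ℝ) (b : Fin p → ℝ) (x : Fin n → ℝ) :
    x ∈ Rset a b (fun q => decide (aff (a q.2) (b q.2) x ≤ aff (a q.1) (b q.1) x)) := by
  intro q _
  by_cases hle : aff (a q.2) (b q.2) x ≤ aff (a q.1) (b q.1) x
  · simp [hle]
  · simp [hle, le_of_not_ge hle]

/-- the branch selected by a pattern -/
def br {p : ℕ} (s : Fin p × Fin p → Bool) (q : Fin p × Fin p) : Fin p :=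
  if s q then q.1 else q.2

/-- on `Rset s`, the max-sum agrees with an affine function -/
lemma hFun_affine_on (a : Fin p → Fin n → ℝ) (b : Fin p → ℝ) (s : Fin p × Fin p → Bool)
    (x : Fin n → ℝ) (hx : x ∈ Rset a b s) :
    (∑ q ∈ pairsF p, max (aff (a q.1) (b q.1) x) (aff (a q.2) (b q.2) x))
      = (∑ t, (∑ q ∈ pairsF p, a (br s q) t) * x t) + (∑ q ∈ pairsF p, b (br s q)) := by
  have h1 : ∀ q ∈ pairsF p,
      max (aff (a q.1) (b q.1) x) (aff (a q.2) (b q.2) x) = aff (a (br s q)) (b (br s q)) x := by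
    intro q hq
    have := hx q hq
    by_cases hs : s q
    · rw [if_pos hs] at this
      simp only [br, if_pos hs]
      exact max_eq_left this
    · rw [if_neg hs] at this
      simp only [br, if_neg hs]
      exact max_eq_right this
  rw [Finset.sum_congr rfl h1]
  simp only [aff]
  rw [Finset.sum_add_distrib]
  congr 1
  rw [Finset.sum_comm]
  refine Finset.sum_congr rfl fun t _ => ?_
  rw [Finset.sum_mul]

/-- packaging a finite family of affine functions into `PiecesLE` -/
lemma piecesLE_pack {K : ℕ} (f : (Fin n → ℝ) → ℝ) (V : Finset ((Fin n → ℝ) × ℝ))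
    (hV0 : V.Nonempty) (hcard : V.card ≤ K)
    (hcover : ∀ x, ∃ v ∈ V, f x = aff v.1 v.2 x) : PiecesLE n K f := by
  classical
  have hpos : 0 < V.card := Finset.card_pos.2 hV0
  set e := V.equivFin.symm with he
  set w1 : ℕ → (Fin n → ℝ) := fun j => if hj : j < V.card then (e ⟨j, hj⟩).1.1 else 0 with hw1
  set w2 : ℕ → ℝ := fun j => if hj : j < V.card then (e ⟨j, hj⟩).1.2 else 0 with hw2
  refine ⟨fun i => w1 (min (i : ℕ) (V.card - 1)), fun i => w2 (min (i : ℕ) (V.card - 1)), ?_⟩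
  intro x
  obtain ⟨v, hv, hfx⟩ := hcover x
  set k := e.symm ⟨v, hv⟩ with hk
  have hk2 := k.2
  refine ⟨⟨(k : ℕ), lt_of_lt_of_le hk2 hcard⟩, ?_⟩
  simp only [Fin.val_mk]
  have hmin2 : min ((k : ℕ)) (V.card - 1) = (k : ℕ) := by omega
  rw [hmin2, hw1, hw2]
  simp only [dif_pos hk2, Fin.eta]
  rw [hk, Equiv.apply_symm_apply]
  exact hfx

end C


section D
open Finset
variable {n p : ℕ} (a : Fin p → Fin n → ℝ) (b : Fin p → ℝ)

/-- difference of two pieces -/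
def dpair (a : Fin p → Fin n → ℝ) (b : Fin p → ℝ) (q : Fin p × Fin p) (x : Fin n → ℝ) : ℝ :=
  aff (a q.1) (b q.1) x - aff (a q.2) (b q.2) x

/-- degenerate pair : the two pieces agree everywhere -/
def Deg (a : Fin p → Fin n → ℝ) (b : Fin p → ℝ) (q : Fin p × Fin p) : Prop :=
  ∀ y, dpair a b q y = 0

/-- open-type region of a strict sign pattern -/
def Dset (a : Fin p → Fin n → ℝ) (b : Fin p → ℝ) (s : Fin p × Fin p → Bool) :
    Set (Fin n → ℝ) :=
  {x | ∀ q ∈ pairsF p, (s q = true → 0 < dpair a b q x) ∧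
    (s q = false → Deg a b q ∨ dpair a b q x < 0)}

lemma dpair_comb (q : Fin p × Fin p) (x y : Fin n → ℝ) (α β : ℝ) (hab : α + β = 1) :
    dpair a b q (α • x + β • y) = α * dpair a b q x + β * dpair a b q y := by
  simp only [dpair, affEval2 _ _ x y α β hab]; ring

lemma dpair_continuous (q : Fin p × Fin p) : Continuous (dpair a b q) :=
  (aff_continuous _ _).sub (aff_continuous _ _)

lemma Dset_convex (s : Fin p × Fin p → Bool) : Convex ℝ (Dset a b s) := by
  intro x hx y hy α β hα hβ hab
  intro q hq
  obtain ⟨hx1, hx2⟩ := hx q hq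
  obtain ⟨hy1, hy2⟩ := hy q hq
  constructor
  · intro hs
    rw [dpair_comb a b q x y α β hab]
    have h1 := hx1 hs
    have h2 := hy1 hs
    rcases eq_or_lt_of_le hα with hh | hh
    · rw [← hh]; simp only [zero_mul, zero_add]
      have : β = 1 := by linarith
      rw [this]; linarith
    · nlinarith
  · intro hs
    by_cases hdeg : Deg a b q
    · exact Or.inl hdeg
    · right
      have h1 := (hx2 hs).resolve_left hdeg
      have h2 := (hy2 hs).resolve_left hdeg
      rw [dpair_comb a b q x y α β hab]
      rcases eq_or_lt_of_le hα with hh | hh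
      · rw [← hh]; simp only [zero_mul, zero_add]
        have : β = 1 := by linarith
        rw [this]; linarith
      · nlinarith

/-- the core dense set where all nondegenerate differences are nonzero -/
def Dcore (a : Fin p → Fin n → ℝ) (b : Fin p → ℝ) : Set (Fin n → ℝ) :=
  {x | ∀ q ∈ pairsF p, ¬ Deg a b q → dpair a b q x ≠ 0}

lemma dense_open_biInter {X : Type*} [TopologicalSpace X] {ι : Type*}
    (F : Finset ι) (U : ι → Set X) (h : ∀ i ∈ F, IsOpen (U i) ∧ Dense (U i)) :
    IsOpen (⋂ i ∈ F, U i) ∧ Dense (⋂ i ∈ F, U i) := by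
  classical
  induction F using Finset.induction with
  | empty => simp
  | insert i F' ha IH =>
    rw [Finset.set_biInter_insert]
    obtain ⟨ho, hd⟩ := IH (fun j hj => h j (Finset.mem_insert_of_mem hj))
    obtain ⟨ho1, hd1⟩ := h i (Finset.mem_insert_self i F')
    exact ⟨ho1.inter ho, hd1.inter_of_isOpen_left hd ho1⟩

lemma dcore_dense : Dense (Dcore a b) := by
  have hU : ∀ q ∈ pairsF p, IsOpen {x | ¬ Deg a b q → dpair a b q x ≠ 0} ∧
      Dense {x | ¬ Deg a b q → dpair a b q x ≠ 0} := by
    intro q _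
    by_cases hdeg : Deg a b q
    · have : {x | ¬ Deg a b q → dpair a b q x ≠ 0} = Set.univ := by
        ext z; simp [hdeg]
      rw [this]; exact ⟨isOpen_univ, dense_univ⟩
    · have heq : {x | ¬ Deg a b q → dpair a b q x ≠ 0} = {x | dpair a b q x ≠ 0} := by
        ext z; simp [hdeg]
      rw [heq]
      constructor
      · have : {x | dpair a b q x ≠ 0} = (dpair a b q) ⁻¹' ({0}ᶜ) := rfl
        rw [this]
        exact isOpen_compl_singleton.preimage (dpair_continuous a b q)
      · -- density of the complement of the zero set of a not-identically-zero affine map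
        simp only [Deg, not_forall] at hdeg
        obtain ⟨y₀, hy₀⟩ := hdeg
        rw [Metric.dense_iff]
        intro x ε hε
        by_cases hx : dpair a b q x = 0
        · set θ : ℝ := ε / (2 * (dist y₀ x + 1)) with hθ
          have hdist : (0:ℝ) ≤ dist y₀ x := dist_nonneg
          have hθpos : 0 < θ := by
            apply div_pos hε; nlinarith
          refine ⟨(1-θ) • x + θ • y₀, ?_, ?_⟩
          · rw [Metric.mem_ball]
            have hsub : (1-θ) • x + θ • y₀ - x = θ • (y₀ - x) := by module
            rw [dist_eq_norm, hsub, norm_smul]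
            rw [Real.norm_eq_abs, abs_of_pos hθpos]
            rw [← dist_eq_norm]
            rw [hθ]
            rw [div_mul_eq_mul_div, div_lt_iff₀ (by nlinarith : (0:ℝ) < 2 * (dist y₀ x + 1))]
            nlinarith
          · show dpair a b q ((1-θ) • x + θ • y₀) ≠ 0
            rw [dpair_comb a b q x y₀ (1-θ) θ (by ring), hx]
            simp only [mul_zero, zero_add]
            exact mul_ne_zero (ne_of_gt hθpos) hy₀
        · exact ⟨x, Metric.mem_ball_self hε, hx⟩
  have := dense_open_biInter (pairsF p) _ hU
  have heq : Dcore a b = ⋂ q ∈ pairsF p, {x | ¬ Deg a b q → dpair a b q x ≠ 0} := by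
    ext z; simp [Dcore]
  rw [heq]
  exact this.2

lemma dcore_subset_union : Dcore a b ⊆ ⋃ s : Fin p × Fin p → Bool, Dset a b s := by
  intro x hx
  refine Set.mem_iUnion.2 ⟨fun q => decide (0 < dpair a b q x), ?_⟩
  intro q hq
  constructor
  · intro hs
    simpa using hs
  · intro hs
    by_cases hdeg : Deg a b q
    · exact Or.inl hdeg
    · right
      have h1 : ¬ (0 < dpair a b q x) := by simpa using hs
      have h2 := hx q hq hdeg
      rcases lt_trichotomy (dpair a b q x) 0 with hh | hh | hh
      · exact hh
      · exact absurd hh h2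
      · exact absurd hh h1

lemma closure_union_eq_univ :
    (⋃ s : Fin p × Fin p → Bool, closure (Dset a b s)) = Set.univ := by
  apply Set.eq_univ_of_univ_subset
  have h1 : Dense (⋃ s : Fin p × Fin p → Bool, Dset a b s) :=
    (dcore_dense a b).mono (dcore_subset_union a b)
  have h2 : closure (⋃ s : Fin p × Fin p → Bool, Dset a b s)
      ⊆ ⋃ s : Fin p × Fin p → Bool, closure (Dset a b s) := by
    apply closure_minimal
    · exact Set.iUnion_mono fun s => subset_closure
    · exact isClosed_iUnion_of_finite fun s => isClosed_closure
  intro x _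
  exact h2 (by rw [h1.closure_eq]; trivial)

/-- on the closure of a region, each max-term follows its branch -/
lemma branch_eqOn (s : Fin p × Fin p → Bool) (q : Fin p × Fin p) (hq : q ∈ pairsF p) :
    Set.EqOn (fun x => max (aff (a q.1) (b q.1) x) (aff (a q.2) (b q.2) x))
      (aff (a (br s q)) (b (br s q))) (closure (Dset a b s)) := by
  have hD : Set.EqOn (fun x => max (aff (a q.1) (b q.1) x) (aff (a q.2) (b q.2) x))
      (aff (a (br s q)) (b (br s q))) (Dset a b s) := by
    intro x hx
    obtain ⟨h1, h2⟩ := hx q hq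
    by_cases hs : s q
    · have := h1 hs
      simp only [br, if_pos hs]
      have hle : aff (a q.2) (b q.2) x ≤ aff (a q.1) (b q.1) x := by
        simp only [dpair] at this; linarith
      exact max_eq_left hle
    · have := h2 (Bool.not_eq_true _ |>.mp hs)
      simp only [br, if_neg hs]
      rcases this with hdeg | hlt
      · have h0 := hdeg x
        simp only [dpair] at h0
        have : aff (a q.1) (b q.1) x ≤ aff (a q.2) (b q.2) x := by linarith
        exact max_eq_right this
      · simp only [dpair] at hlt
        exact max_eq_right (by linarith)
  exact hD.closure ((aff_continuous _ _).max (aff_continuous _ _)) (aff_continuous _ _)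

/-- two pieces which agree at some point of a region agree on the whole region -/
lemma dichotomy (s : Fin p × Fin p → Bool) (i j : Fin p) (x x' : Fin n → ℝ)
    (hx : x ∈ Dset a b s) (hx' : x' ∈ Dset a b s)
    (heq : aff (a i) (b i) x = aff (a j) (b j) x) :
    aff (a i) (b i) x' = aff (a j) (b j) x' := by
  rcases lt_trichotomy i j with hij | hij | hij
  · have hq : (i, j) ∈ pairsF p := by simp [pairsF, hij]
    obtain ⟨h1, h2⟩ := hx (i,j) hq
    have hd0 : dpair a b (i,j) x = 0 := by simp only [dpair]; rw [heq]; ring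
    cases hs : s (i,j) with
    | true => exfalso; have := h1 hs; rw [hd0] at this; exact lt_irrefl 0 this
    | false =>
      rcases h2 hs with hdeg | hlt
      · have := hdeg x'
        simp only [dpair] at this; linarith
      · exfalso; rw [hd0] at hlt; exact lt_irrefl 0 hlt
  · rw [hij]
  · have hq : (j, i) ∈ pairsF p := by simp [pairsF, hij]
    obtain ⟨h1, h2⟩ := hx (j,i) hq
    have hd0 : dpair a b (j,i) x = 0 := by simp only [dpair]; rw [heq]; ring
    cases hs : s (j,i) with
    | true => exfalso; have := h1 hs; rw [hd0] at this; exact lt_irrefl 0 this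
    | false =>
      rcases h2 hs with hdeg | hlt
      · have := hdeg x'
        simp only [dpair] at this; linarith
      · exfalso; rw [hd0] at hlt; exact lt_irrefl 0 hlt

/-- on the closure of a nonempty region, `f` agrees with a single piece -/
lemma piece_selection (f : (Fin n → ℝ) → ℝ) (hfc : Continuous f)
    (hpieces : ∀ x, ∃ i, f x = aff (a i) (b i) x)
    (s : Fin p × Fin p → Bool) (hne : (Dset a b s).Nonempty) :
    ∃ i, Set.EqOn f (aff (a i) (b i)) (closure (Dset a b s)) := by
  classical
  obtain ⟨x₀, hx₀⟩ := hne
  obtain ⟨i₀, hi₀⟩ := hpieces x₀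
  refine ⟨i₀, Set.EqOn.closure ?_ hfc (aff_continuous _ _)⟩
  -- prove EqOn on Dset itself via connectedness
  haveI : PreconnectedSpace (Dset a b s) :=
    Subtype.preconnectedSpace (Dset_convex a b s).isPreconnected
  set A : Set (Dset a b s) := {z | f z.1 = aff (a i₀) (b i₀) z.1} with hA
  have hAclosed : IsClosed A := by
    have : A = (fun z : Dset a b s => f z.1 - aff (a i₀) (b i₀) z.1) ⁻¹' {0} := by
      ext z; simp [hA, sub_eq_zero]
    rw [this]
    exact isClosed_singleton.preimage
      ((hfc.comp continuous_subtype_val).sub ((aff_continuous _ _).comp continuous_subtype_val))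
  have hAopen : IsOpen A := by
    rw [← isClosed_compl_iff]
    have hcompl : Aᶜ = ⋃ i ∈ Finset.univ.filter
        (fun i : Fin p => ¬ ∀ w ∈ Dset a b s, aff (a i) (b i) w = aff (a i₀) (b i₀) w),
        {z : Dset a b s | f z.1 = aff (a i) (b i) z.1} := by
      ext z
      simp only [Set.mem_compl_iff, hA, Set.mem_setOf_eq, Set.mem_iUnion,
        Finset.mem_filter, Finset.mem_univ, true_and]
      constructor
      · intro hz
        obtain ⟨i, hi⟩ := hpieces z.1
        refine ⟨i, ?_, hi⟩
        intro hall
        exact hz (by rw [hi]; exact hall z.1 z.2)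
      · rintro ⟨i, hibad, hiz⟩ hzeq
        apply hibad
        intro w hw
        exact dichotomy a b s i i₀ z.1 w z.2 hw (by rw [← hiz, hzeq])
    rw [hcompl]
    apply Set.Finite.isClosed_biUnion (Set.toFinite _)
    intro i _
    have : {z : Dset a b s | f z.1 = aff (a i) (b i) z.1}
        = (fun z : Dset a b s => f z.1 - aff (a i) (b i) z.1) ⁻¹' {0} := by
      ext z; simp [sub_eq_zero]
    rw [this]
    exact isClosed_singleton.preimage
      ((hfc.comp continuous_subtype_val).sub ((aff_continuous _ _).comp continuous_subtype_val))
  have hAne : A.Nonempty := ⟨⟨x₀, hx₀⟩, hi₀⟩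
  have : A = Set.univ := by
    rcases isClopen_iff.1 ⟨hAclosed, hAopen⟩ with hh | hh
    · exfalso; rw [hh] at hAne; exact Set.not_nonempty_empty hAne
    · exact hh
  intro w hw
  have : (⟨w, hw⟩ : Dset a b s) ∈ A := by rw [this]; trivial
  exact this

end D


section D2
open Finset
variable {n p : ℕ} (a : Fin p → Fin n → ℝ) (b : Fin p → ℝ)

lemma interval_accum {ι : Type*} [Fintype ι] [Nonempty ι] (J : ι → Set ℝ)
    (hJc : ∀ s, IsClosed (J s)) (hJconv : ∀ s, Convex ℝ (J s))
    (hcov : ∀ t, ∃ s, t ∈ J s) (ts : ℝ) :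
    ∃ s, ∃ ε, 0 < ε ∧ Set.Icc ts (ts + ε) ⊆ J s := by
  have hAcc : ∃ s, ∀ δ, 0 < δ → ∃ u, u ∈ Set.Ioc ts (ts + δ) ∧ u ∈ J s := by
    by_contra hcon
    push_neg at hcon
    choose δ hδpos hδ using hcon
    set δ0 := Finset.univ.inf' Finset.univ_nonempty δ with hδ0
    have hδ0pos : 0 < δ0 := by
      rw [hδ0, Finset.lt_inf'_iff]
      exact fun s _ => hδpos s
    obtain ⟨s₀, hs₀⟩ := hcov (ts + δ0)
    exact hδ s₀ (ts + δ0) ⟨by linarith, by linarith [Finset.inf'_le δ (Finset.mem_univ s₀)]⟩ hs₀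
  obtain ⟨s, hs⟩ := hAcc
  have hts : ts ∈ J s := by
    rw [← (hJc s).closure_eq, Metric.mem_closure_iff]
    intro ε hε
    obtain ⟨u, hu1, hu2⟩ := hs (ε/2) (by linarith)
    refine ⟨u, hu2, ?_⟩
    rw [Real.dist_eq, abs_lt]
    constructor
    · linarith [hu1.1, hu1.2, hε]
    · linarith [hu1.1, hu1.2, hε]
  obtain ⟨u1, hu1, hu1J⟩ := hs 1 one_pos
  refine ⟨s, u1 - ts, by linarith [hu1.1], ?_⟩
  have hOC := (hJconv s).ordConnected.out hts hu1J
  intro t ht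
  apply hOC
  have h2 : ts + (u1 - ts) = u1 := by ring
  rw [h2] at ht
  exact ht

lemma interval_accum_left {ι : Type*} [Fintype ι] [Nonempty ι] (J : ι → Set ℝ)
    (hJc : ∀ s, IsClosed (J s)) (hJconv : ∀ s, Convex ℝ (J s))
    (hcov : ∀ t, ∃ s, t ∈ J s) (ts : ℝ) :
    ∃ s, ∃ ε, 0 < ε ∧ Set.Icc (ts - ε) ts ⊆ J s := by
  set J' : ι → Set ℝ := fun s => (fun t : ℝ => -t) ⁻¹' (J s) with hJ'
  have hJ'c : ∀ s, IsClosed (J' s) := fun s => (hJc s).preimage continuous_neg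
  have hJ'conv : ∀ s, Convex ℝ (J' s) := by
    intro s u hu v hv α β hα hβ hab
    have h : -(α • u + β • v) = α • (-u) + β • (-v) := by
      simp only [smul_eq_mul]; ring
    show -(α • u + β • v) ∈ J s
    rw [h]
    exact hJconv s hu hv hα hβ hab
  have hcov' : ∀ t, ∃ s, t ∈ J' s := by
    intro t; obtain ⟨s, hs⟩ := hcov (-t); exact ⟨s, Set.mem_preimage.2 hs⟩
  obtain ⟨s, ε, hε, hsub⟩ := interval_accum J' hJ'c hJ'conv hcov' (-ts)
  refine ⟨s, ε, hε, ?_⟩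
  intro t ht
  have h1 : -t ∈ Set.Icc (-ts) (-ts + ε) := ⟨by linarith [ht.2], by linarith [ht.1]⟩
  have h2 : -(-t) ∈ J s := hsub h1
  rwa [neg_neg] at h2

lemma br_le (s : Fin p × Fin p → Bool) (q : Fin p × Fin p) (z : Fin n → ℝ) :
    aff (a (br s q)) (b (br s q)) z ≤ max (aff (a q.1) (b q.1) z) (aff (a q.2) (b q.2) z) := by
  by_cases hs : s q
  · simp only [br, if_pos hs]; exact le_max_left _ _
  · simp only [br, if_neg hs]; exact le_max_right _ _

lemma gConvexOn (f : (Fin n → ℝ) → ℝ) (hfc : Continuous f)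
    (hpieces : ∀ x, ∃ i, f x = aff (a i) (b i) x) :
    ConvexOn ℝ Set.univ (fun z => f z +
      ∑ q ∈ pairsF p, max (aff (a q.1) (b q.1) z) (aff (a q.2) (b q.2) z)) := by
  classical
  set G : (Fin n → ℝ) → ℝ := fun z => f z +
      ∑ q ∈ pairsF p, max (aff (a q.1) (b q.1) z) (aff (a q.2) (b q.2) z) with hG
  have hGc : Continuous G :=
    hfc.add (continuous_finset_sum _ fun q _ => (aff_continuous _ _).max (aff_continuous _ _))
  refine ⟨convex_univ, ?_⟩
  intro x _ y _ α β hα hβ hab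
  show G (α • x + β • y) ≤ α • G x + β • G y
  set L : ℝ → Fin n → ℝ := fun θ => (1-θ) • x + θ • y with hL
  have hLc : Continuous L := by
    apply Continuous.add
    · exact (continuous_const.sub continuous_id).smul continuous_const
    · exact continuous_id.smul continuous_const
  have hLcomb : ∀ (θ1 θ2 α' β' : ℝ), α' + β' = 1 →
      L (α' * θ1 + β' * θ2) = α' • L θ1 + β' • L θ2 := by
    intro θ1 θ2 α' β' h
    funext t
    simp only [hL, Pi.add_apply, Pi.smul_apply, smul_eq_mul]
    linear_combination (- (x t)) * h
  set J : (Fin p × Fin p → Bool) → Set ℝ := fun s => L ⁻¹' (closure (Dset a b s)) with hJ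
  have hJc : ∀ s, IsClosed (J s) := fun s => isClosed_closure.preimage hLc
  have hJconv : ∀ s, Convex ℝ (J s) := by
    intro s t1 ht1 t2 ht2 α' β' hα' hβ' hab'
    show L (α' • t1 + β' • t2) ∈ closure (Dset a b s)
    rw [smul_eq_mul, smul_eq_mul, hLcomb t1 t2 α' β' hab']
    exact (Dset_convex a b s).closure ht1 ht2 hα' hβ' hab'
  have hJcov : ∀ t, ∃ s, t ∈ J s := by
    intro t
    have : L t ∈ ⋃ s : Fin p × Fin p → Bool, closure (Dset a b s) := by
      rw [closure_union_eq_univ]; trivial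
    obtain ⟨s, hs⟩ := Set.mem_iUnion.1 this
    exact ⟨s, Set.mem_preimage.2 hs⟩
  -- slope of a piece along the line
  set Sl : Fin p → ℝ := fun i => aff (a i) (b i) y - aff (a i) (b i) x with hSl
  have hlineval : ∀ (i : Fin p) (ts θ : ℝ),
      aff (a i) (b i) (L θ) = aff (a i) (b i) (L ts) + (θ - ts) * Sl i := by
    intro i ts θ
    have h1 : aff (a i) (b i) (L θ)
        = (1-θ) * aff (a i) (b i) x + θ * aff (a i) (b i) y := by
      rw [hL]; exact affEval2 _ _ x y (1-θ) θ (by ring)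
    have h2 : aff (a i) (b i) (L ts)
        = (1-ts) * aff (a i) (b i) x + ts * aff (a i) (b i) y := by
      rw [hL]; exact affEval2 _ _ x y (1-ts) ts (by ring)
    rw [h1, h2, hSl]; ring
  -- the local structure hypothesis of `oneD_convex`
  have hloc : ∀ ts : ℝ, ∃ ε, ε > 0 ∧ ∃ ρL ρR : ℝ, ρL ≤ ρR ∧
      (∀ u, ts - ε ≤ u → u ≤ ts → G (L u) = G (L ts) + ρL * (u - ts)) ∧
      (∀ u, ts ≤ u → u ≤ ts + ε → G (L u) = G (L ts) + ρR * (u - ts)) := by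
    intro ts
    obtain ⟨sR, εR, hεR, hsubR⟩ := interval_accum J hJc hJconv hJcov ts
    obtain ⟨sL, εL, hεL, hsubL⟩ := interval_accum_left J hJc hJconv hJcov ts
    have hVR : L ts ∈ closure (Dset a b sR) := hsubR ⟨le_refl ts, by linarith⟩
    have hVL : L ts ∈ closure (Dset a b sL) := hsubL ⟨by linarith, le_refl ts⟩
    have hneR : (Dset a b sR).Nonempty := by
      by_contra hemp
      rw [Set.not_nonempty_iff_eq_empty] at hemp
      rw [hemp, closure_empty] at hVR
      exact Set.notMem_empty _ hVR
    have hneL : (Dset a b sL).Nonempty := by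
      by_contra hemp
      rw [Set.not_nonempty_iff_eq_empty] at hemp
      rw [hemp, closure_empty] at hVL
      exact Set.notMem_empty _ hVL
    obtain ⟨iR, hiR⟩ := piece_selection a b f hfc hpieces sR hneR
    obtain ⟨iL, hiL⟩ := piece_selection a b f hfc hpieces sL hneL
    set ρR := Sl iR + ∑ q ∈ pairsF p, Sl (br sR q) with hρR
    set ρL := Sl iL + ∑ q ∈ pairsF p, Sl (br sL q) with hρL
    -- the affine formula for G∘L on each side
    have hform : ∀ (s : Fin p × Fin p → Bool) (i : Fin p),
        Set.EqOn f (aff (a i) (b i)) (closure (Dset a b s)) →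
        ∀ u, L u ∈ closure (Dset a b s) → L ts ∈ closure (Dset a b s) →
        G (L u) = G (L ts) + (Sl i + ∑ q ∈ pairsF p, Sl (br s q)) * (u - ts) := by
      intro s i hi u hmu hmts
      have hexp : ∀ w, L w ∈ closure (Dset a b s) →
          G (L w) = aff (a i) (b i) (L w)
            + ∑ q ∈ pairsF p, aff (a (br s q)) (b (br s q)) (L w) := by
        intro w hmw
        rw [hG]
        simp only
        rw [hi hmw]
        congr 1
        refine Finset.sum_congr rfl fun q hq => ?_
        exact branch_eqOn a b s q hq hmw
      rw [hexp u hmu, hexp ts hmts]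
      rw [hlineval i ts u]
      have hsum : ∑ q ∈ pairsF p, aff (a (br s q)) (b (br s q)) (L u)
          = ∑ q ∈ pairsF p, (aff (a (br s q)) (b (br s q)) (L ts) + (u - ts) * Sl (br s q)) :=
        Finset.sum_congr rfl fun q _ => hlineval (br s q) ts u
      rw [hsum, Finset.sum_add_distrib, ← Finset.mul_sum]
      ring
    -- slope comparison
    have hbrVL : ∀ q ∈ pairsF p, aff (a (br sL q)) (b (br sL q)) (L ts)
        = max (aff (a q.1) (b q.1) (L ts)) (aff (a q.2) (b q.2) (L ts)) :=
      fun q hq => (branch_eqOn a b sL q hq hVL).symm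
    have hbrVR : ∀ q ∈ pairsF p, aff (a (br sR q)) (b (br sR q)) (L ts)
        = max (aff (a q.1) (b q.1) (L ts)) (aff (a q.2) (b q.2) (L ts)) :=
      fun q hq => (branch_eqOn a b sR q hq hVR).symm
    have huRmem : L (ts + εR) ∈ closure (Dset a b sR) := hsubR ⟨by linarith, le_refl _⟩
    have huLmem : L (ts - εL) ∈ closure (Dset a b sL) := hsubL ⟨le_refl _, by linarith⟩
    have hA : ∀ q ∈ pairsF p, Sl (br sL q) ≤ Sl (br sR q) := by
      intro q hq
      have h1 : aff (a (br sL q)) (b (br sL q)) (L (ts + εR))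
          ≤ aff (a (br sR q)) (b (br sR q)) (L (ts + εR)) :=
        le_trans (br_le a b sL q _) (le_of_eq (branch_eqOn a b sR q hq huRmem))
      rw [hlineval (br sL q) ts (ts + εR), hlineval (br sR q) ts (ts + εR)] at h1
      have h2 : aff (a (br sL q)) (b (br sL q)) (L ts)
          = aff (a (br sR q)) (b (br sR q)) (L ts) := by
        rw [hbrVL q hq, hbrVR q hq]
      rw [h2] at h1
      have h3 : (ts + εR - ts) = εR := by ring
      rw [h3] at h1
      nlinarith
    have hfVL : f (L ts) = aff (a iL) (b iL) (L ts) := hiL hVL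
    have hfVR : f (L ts) = aff (a iR) (b iR) (L ts) := hiR hVR
    have hρcmp : ρL ≤ ρR := by
      by_cases hii : iL = iR
      · rw [hρL, hρR, hii]
        exact add_le_add (le_refl _) (Finset.sum_le_sum hA)
      · -- the exchange pair
        set qs : Fin p × Fin p := if iL < iR then (iL, iR) else (iR, iL) with hqs
        have hqlt : qs.1 < qs.2 := by
          rw [hqs]
          by_cases hlt : iL < iR
          · rw [if_pos hlt]; exact hlt
          · rw [if_neg hlt]
            exact lt_of_le_of_ne (not_lt.1 hlt) (Ne.symm hii)
        have hqmem : qs ∈ pairsF p := by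
          simp [pairsF, hqlt]
        have hq1 : aff (a qs.1) (b qs.1) (L ts) = f (L ts) := by
          rw [hqs]
          by_cases hlt : iL < iR
          · rw [if_pos hlt]; exact hfVL.symm
          · rw [if_neg hlt]; exact hfVR.symm
        have hq2 : aff (a qs.2) (b qs.2) (L ts) = f (L ts) := by
          rw [hqs]
          by_cases hlt : iL < iR
          · rw [if_pos hlt]; exact hfVR.symm
          · rw [if_neg hlt]; exact hfVL.symm
        have hmaxV : max (aff (a qs.1) (b qs.1) (L ts)) (aff (a qs.2) (b qs.2) (L ts))
            = f (L ts) := by rw [hq1, hq2, max_self]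
        have hiL_le : ∀ z, aff (a iL) (b iL) z
            ≤ max (aff (a qs.1) (b qs.1) z) (aff (a qs.2) (b qs.2) z) := by
          intro z
          rw [hqs]
          by_cases hlt : iL < iR
          · rw [if_pos hlt]; exact le_max_left _ _
          · rw [if_neg hlt]; exact le_max_right _ _
        have hiR_le : ∀ z, aff (a iR) (b iR) z
            ≤ max (aff (a qs.1) (b qs.1) z) (aff (a qs.2) (b qs.2) z) := by
          intro z
          rw [hqs]
          by_cases hlt : iL < iR
          · rw [if_pos hlt]; exact le_max_right _ _
          · rw [if_neg hlt]; exact le_max_left _ _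
        -- right inequality : Sl iL ≤ Sl (br sR qs)
        have hR1 : Sl iL ≤ Sl (br sR qs) := by
          have h1 : aff (a iL) (b iL) (L (ts + εR))
              ≤ aff (a (br sR qs)) (b (br sR qs)) (L (ts + εR)) :=
            le_trans (hiL_le _) (le_of_eq (branch_eqOn a b sR qs hqmem huRmem))
          have h2 : aff (a iL) (b iL) (L ts)
              = aff (a (br sR qs)) (b (br sR qs)) (L ts) := by
            rw [← hfVL, hbrVR qs hqmem, hmaxV]
          rw [hlineval iL ts (ts + εR), hlineval (br sR qs) ts (ts + εR), h2] at h1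
          have h3 : (ts + εR - ts) = εR := by ring
          rw [h3] at h1
          nlinarith
        -- left inequality : Sl (br sL qs) ≤ Sl iR
        have hL1 : Sl (br sL qs) ≤ Sl iR := by
          have h1 : aff (a iR) (b iR) (L (ts - εL))
              ≤ aff (a (br sL qs)) (b (br sL qs)) (L (ts - εL)) :=
            le_trans (hiR_le _) (le_of_eq (branch_eqOn a b sL qs hqmem huLmem))
          have h2 : aff (a iR) (b iR) (L ts)
              = aff (a (br sL qs)) (b (br sL qs)) (L ts) := by
            rw [← hfVR, hbrVL qs hqmem, hmaxV]
          rw [hlineval iR ts (ts - εL), hlineval (br sL qs) ts (ts - εL), h2] at h1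
          have h3 : (ts - εL - ts) = -εL := by ring
          rw [h3] at h1
          nlinarith
        have hesum : ∑ q ∈ (pairsF p).erase qs, Sl (br sL q)
            ≤ ∑ q ∈ (pairsF p).erase qs, Sl (br sR q) :=
          Finset.sum_le_sum fun q hq => hA q (Finset.mem_of_mem_erase hq)
        have heL := Finset.add_sum_erase (pairsF p) (fun q => Sl (br sL q)) hqmem
        have heR := Finset.add_sum_erase (pairsF p) (fun q => Sl (br sR q)) hqmem
        rw [hρL, hρR, ← heL, ← heR]
        linarith
    refine ⟨min εL εR, lt_min hεL hεR, ρL, ρR, hρcmp, ?_, ?_⟩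
    · intro u h1 h2
      have hmu : L u ∈ closure (Dset a b sL) :=
        hsubL ⟨by have := min_le_left εL εR; linarith, h2⟩
      rw [hρL]
      exact hform sL iL hiL u hmu hVL
    · intro u h1 h2
      have hmu : L u ∈ closure (Dset a b sR) :=
        hsubR ⟨h1, by have := min_le_right εL εR; linarith⟩
      rw [hρR]
      exact hform sR iR hiR u hmu hVR
  -- apply the one-dimensional convexity lemma
  have hΦc : Continuous (fun θ => G (L θ)) := hGc.comp hLc
  have hconv := oneD_convex (fun θ => G (L θ)) hΦc (fun t => by
    obtain ⟨ε, hε, ρ1, ρ2, hcmp, hfl, hfr⟩ := hloc t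
    exact ⟨ε, hε, ρ1, ρ2, hcmp, hfl, hfr⟩) 0 1 β hβ (by linarith)
  have hconv2 : G (L ((1-β) * 0 + β * 1)) ≤ (1-β) * G (L 0) + β * G (L 1) := hconv
  have harg : (1-β) * 0 + β * 1 = β := by ring
  rw [harg] at hconv2
  have hL0 : L 0 = x := by simp [hL]
  have hL1 : L 1 = y := by simp [hL]
  rw [hL0, hL1] at hconv2
  have hLβ : L β = α • x + β • y := by
    show (1-β) • x + β • y = α • x + β • y
    have h1b : (1 - β) = α := by linarith
    rw [h1b]
  rw [hLβ] at hconv2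
  rw [show (1:ℝ) - β = α from by linarith] at hconv2
  simpa [smul_eq_mul] using hconv2

end D2


section E
open Finset
variable {n p : ℕ}

/-- enumeration of the ordered pairs -/
noncomputable def eE (p : ℕ) : Fin (pairsF p).card ≃ {q // q ∈ pairsF p} :=
  (pairsF p).equivFin.symm

/-- coefficients of the differences ℓ_{q.2} - ℓ_{q.1} -/
noncomputable def cE (a : Fin p → Fin n → ℝ) : Fin (pairsF p).card → Fin n → ℝ :=
  fun k t => a ((eE p k).1.2) t - a ((eE p k).1.1) t

noncomputable def rE (b : Fin p → ℝ) : Fin (pairsF p).card → ℝ :=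
  fun k => b ((eE p k).1.2) - b ((eE p k).1.1)

noncomputable def patE (a : Fin p → Fin n → ℝ) (b : Fin p → ℝ) (x : Fin n → ℝ) :
    Fin (pairsF p).card → Bool := pat (cE a) (rE b) x

noncomputable def br2E (s : Fin (pairsF p).card → Bool) (k : Fin (pairsF p).card) : Fin p :=
  if s k then (eE p k).1.2 else (eE p k).1.1

lemma sum_pairs_eq {M : Type*} [AddCommMonoid M] (F : Fin p × Fin p → M) :
    ∑ q ∈ pairsF p, F q = ∑ k : Fin (pairsF p).card, F ((eE p k) : Fin p × Fin p) := by
  rw [← Finset.sum_coe_sort (pairsF p) F]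
  exact (Fintype.sum_equiv (eE p) _ _ (fun k => rfl)).symm

lemma hsum_eq (a : Fin p → Fin n → ℝ) (b : Fin p → ℝ) (x : Fin n → ℝ) :
    (∑ q ∈ pairsF p, max (aff (a q.1) (b q.1) x) (aff (a q.2) (b q.2) x))
      = (∑ t, (∑ k, a (br2E (patE a b x) k) t) * x t)
        + (∑ k, b (br2E (patE a b x) k)) := by
  rw [sum_pairs_eq]
  have hterm : ∀ k : Fin (pairsF p).card,
      max (aff (a ((eE p k) : Fin p × Fin p).1) (b ((eE p k) : Fin p × Fin p).1) x)
          (aff (a ((eE p k) : Fin p × Fin p).2) (b ((eE p k) : Fin p × Fin p).2) x)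
        = aff (a (br2E (patE a b x) k)) (b (br2E (patE a b x) k)) x := by
    intro k
    have hsubeq := sub_aff (a ((eE p k) : Fin p × Fin p).2) (a ((eE p k) : Fin p × Fin p).1)
      (b ((eE p k) : Fin p × Fin p).2) (b ((eE p k) : Fin p × Fin p).1) x
    cases hb : patE a b x k with
    | true =>
      have : 0 ≤ (∑ t, cE a k t * x t) + rE b k := by
        have := hb
        simp only [patE, pat, decide_eq_true_eq] at this
        exact this
      simp only [br2E, hb, if_pos]
      apply max_eq_right
      simp only [cE, rE] at this
      rw [← hsubeq] at this
      linarith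
    | false =>
      have : ¬ (0 ≤ (∑ t, cE a k t * x t) + rE b k) := by
        have := hb
        simp only [patE, pat, decide_eq_false_iff_not] at this
        exact this
      simp only [br2E, hb, if_neg, Bool.false_eq_true, not_false_eq_true]
      apply max_eq_left
      simp only [cE, rE] at this
      rw [← hsubeq] at this
      linarith
  rw [Finset.sum_congr rfl (fun k _ => hterm k)]
  simp only [aff]
  rw [Finset.sum_add_distrib]
  congr 1
  rw [Finset.sum_comm]
  refine Finset.sum_congr rfl fun t _ => ?_
  rw [Finset.sum_mul]

lemma patE_count (a : Fin p → Fin n → ℝ) (b : Fin p → ℝ) (hp : 0 < p) :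
    (Set.range (patE a b)).ncard ≤ p ^ (2 * n) := by
  have h1 : (Set.range (patE a b)).ncard ≤ ((pairsF p).card + 1) ^ (Finset.univ : Finset (Fin n)).card := by
    have : Set.range (patE a b) = Set.range (pat (cE a) (rE b)) := rfl
    rw [this]
    exact signCount (pairsF p).card Finset.univ (cE a) (rE b)
      (fun k t ht => absurd (Finset.mem_univ t) ht)
  have hcard : (Finset.univ : Finset (Fin n)).card = n := by
    rw [Finset.card_univ, Fintype.card_fin]
  rw [hcard] at h1
  have hm : (pairsF p).card + 1 ≤ p * p := by
    have hss : pairsF p ⊂ Finset.univ := by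
      rw [Finset.ssubset_iff_of_subset (Finset.subset_univ _)]
      refine ⟨(⟨0, hp⟩, ⟨0, hp⟩), Finset.mem_univ _, ?_⟩
      simp [pairsF]
    have := Finset.card_lt_card hss
    have huniv : (Finset.univ : Finset (Fin p × Fin p)).card = p * p := by
      simp
    omega
  calc (Set.range (patE a b)).ncard ≤ ((pairsF p).card + 1) ^ n := h1
    _ ≤ (p * p) ^ n := Nat.pow_le_pow_left hm n
    _ = p ^ (2 * n) := by rw [← pow_two, ← pow_mul]

lemma hFun_piecesLE (a : Fin p → Fin n → ℝ) (b : Fin p → ℝ) (hp : 0 < p) :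
    PiecesLE n (p ^ (2 * n + 1)) (fun x =>
      ∑ q ∈ pairsF p, max (aff (a q.1) (b q.1) x) (aff (a q.2) (b q.2) x)) := by
  classical
  letI : DecidableEq ((Fin n → ℝ) × ℝ) := Classical.decEq _
  have hfin : (Set.range (patE a b)).Finite := Set.toFinite _
  apply piecesLE_pack _ (hfin.toFinset.image
    (fun s => (fun t => ∑ k, a (br2E s k) t, ∑ k, b (br2E s k))))
  · exact Finset.Nonempty.image
      ⟨patE a b 0, by rw [Set.Finite.mem_toFinset]; exact ⟨0, rfl⟩⟩ _
  · refine le_trans Finset.card_image_le ?_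
    calc hfin.toFinset.card = (Set.range (patE a b)).ncard :=
        (Set.ncard_eq_toFinset_card _ hfin).symm
      _ ≤ p ^ (2 * n) := patE_count a b hp
      _ ≤ p ^ (2 * n + 1) := Nat.pow_le_pow_right hp (by omega)
  · intro x
    refine ⟨(fun t => ∑ k, a (br2E (patE a b x) k) t, ∑ k, b (br2E (patE a b x) k)), ?_, ?_⟩
    · exact Finset.mem_image.2 ⟨patE a b x,
        by rw [Set.Finite.mem_toFinset]; exact ⟨x, rfl⟩, rfl⟩
    · exact hsum_eq a b x

lemma gFun_piecesLE (a : Fin p → Fin n → ℝ) (b : Fin p → ℝ) (hp : 0 < p)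
    (f : (Fin n → ℝ) → ℝ) (hpieces : ∀ x, ∃ i, f x = aff (a i) (b i) x) :
    PiecesLE n (p ^ (2 * n + 1)) (fun x =>
      f x + ∑ q ∈ pairsF p, max (aff (a q.1) (b q.1) x) (aff (a q.2) (b q.2) x)) := by
  classical
  letI : DecidableEq ((Fin n → ℝ) × ℝ) := Classical.decEq _
  have hfin : (Set.range (patE a b)).Finite := Set.toFinite _
  apply piecesLE_pack _ (((Finset.univ : Finset (Fin p)) ×ˢ hfin.toFinset).image
    (fun iz : Fin p × (Fin (pairsF p).card → Bool) =>
      (fun t => a iz.1 t + ∑ k, a (br2E iz.2 k) t, b iz.1 + ∑ k, b (br2E iz.2 k))))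
  · exact Finset.Nonempty.image
      ⟨(⟨0, hp⟩, patE a b 0), by
        rw [Finset.mem_product]
        exact ⟨Finset.mem_univ _, by rw [Set.Finite.mem_toFinset]; exact ⟨0, rfl⟩⟩⟩ _
  · refine le_trans Finset.card_image_le ?_
    calc ((Finset.univ : Finset (Fin p)) ×ˢ hfin.toFinset).card
        = p * hfin.toFinset.card := by
          rw [Finset.card_product, Finset.card_univ, Fintype.card_fin]
      _ ≤ p * p ^ (2 * n) := by
          apply Nat.mul_le_mul_left
          rw [← Set.ncard_eq_toFinset_card _ hfin]
          exact patE_count a b hp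
      _ = p ^ (2 * n + 1) := by rw [pow_succ, mul_comm]
  · intro x
    obtain ⟨i, hi⟩ := hpieces x
    refine ⟨(fun t => a i t + ∑ k, a (br2E (patE a b x) k) t,
      b i + ∑ k, b (br2E (patE a b x) k)), ?_, ?_⟩
    · exact Finset.mem_image.2 ⟨(i, patE a b x), by
        rw [Finset.mem_product]
        exact ⟨Finset.mem_univ _, by rw [Set.Finite.mem_toFinset]; exact ⟨x, rfl⟩⟩, rfl⟩
    · show f x + _ = _
      rw [hi, hsum_eq a b x]
      simp only [aff]
      have hsum2 : ∑ t, (a i t + ∑ k, a (br2E (patE a b x) k) t) * x t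
          = (∑ t, a i t * x t) + ∑ t, (∑ k, a (br2E (patE a b x) k) t) * x t := by
        rw [← Finset.sum_add_distrib]
        exact Finset.sum_congr rfl fun t _ => by ring
      rw [hsum2]
      ring

lemma hFun_isCPWL (a : Fin p → Fin n → ℝ) (b : Fin p → ℝ) :
    IsCPWL (fun x : Fin n → ℝ =>
      ∑ q ∈ pairsF p, max (aff (a q.1) (b q.1) x) (aff (a q.2) (b q.2) x)) := by
  constructor
  · exact continuous_finset_sum _ fun q _ => (aff_continuous _ _).max (aff_continuous _ _)
  · set E := Fintype.equivFin ((Fin p × Fin p) → Bool) with hE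
    refine ⟨Fintype.card ((Fin p × Fin p) → Bool), fun i => Rset a b (E.symm i), ?_, ?_, ?_⟩
    · intro i; exact isPolyhedron_Rset a b _
    · apply Set.eq_univ_of_forall
      intro x
      refine Set.mem_iUnion.2 ⟨E (fun q => decide (aff (a q.2) (b q.2) x ≤ aff (a q.1) (b q.1) x)), ?_⟩
      rw [Equiv.symm_apply_apply]
      exact mem_Rset_self a b x
    · intro i
      exact ⟨fun t => ∑ q ∈ pairsF p, a (br (E.symm i) q) t, ∑ q ∈ pairsF p, b (br (E.symm i) q),
        fun x hx => hFun_affine_on a b (E.symm i) x hx⟩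

lemma gFun_isCPWL (a : Fin p → Fin n → ℝ) (b : Fin p → ℝ) (f : (Fin n → ℝ) → ℝ)
    (hf : IsCPWL f) :
    IsCPWL (fun x : Fin n → ℝ =>
      f x + ∑ q ∈ pairsF p, max (aff (a q.1) (b q.1) x) (aff (a q.2) (b q.2) x)) := by
  obtain ⟨hfc, N, Pf, hPoly, hUnion, hAff⟩ := hf
  constructor
  · exact hfc.add
      (continuous_finset_sum _ fun q _ => (aff_continuous _ _).max (aff_continuous _ _))
  · set E := Fintype.equivFin (Fin N × ((Fin p × Fin p) → Bool)) with hE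
    refine ⟨Fintype.card (Fin N × ((Fin p × Fin p) → Bool)),
      fun i => Pf (E.symm i).1 ∩ Rset a b (E.symm i).2, ?_, ?_, ?_⟩
    · intro i; exact isPolyhedron_inter (hPoly _) (isPolyhedron_Rset a b _)
    · apply Set.eq_univ_of_forall
      intro x
      have hx : x ∈ ⋃ i, Pf i := by rw [hUnion]; trivial
      obtain ⟨i0, hi0⟩ := Set.mem_iUnion.1 hx
      refine Set.mem_iUnion.2 ⟨E (i0,
        fun q => decide (aff (a q.2) (b q.2) x ≤ aff (a q.1) (b q.1) x)), ?_⟩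
      rw [Equiv.symm_apply_apply]
      exact ⟨hi0, mem_Rset_self a b x⟩
    · intro i
      obtain ⟨af, cf, haf⟩ := hAff (E.symm i).1
      refine ⟨fun t => af t + ∑ q ∈ pairsF p, a (br (E.symm i).2 q) t,
        cf + ∑ q ∈ pairsF p, b (br (E.symm i).2 q), ?_⟩
      intro x hx
      show f x + _ = _
      rw [haf x hx.1, hFun_affine_on a b (E.symm i).2 x hx.2]
      have hsum2 : ∑ t, (af t + ∑ q ∈ pairsF p, a (br (E.symm i).2 q) t) * x t
          = (∑ t, af t * x t) + ∑ t, (∑ q ∈ pairsF p, a (br (E.symm i).2 q) t) * x t := by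
        rw [← Finset.sum_add_distrib]
        exact Finset.sum_congr rfl fun t _ => by ring
      rw [hsum2]
      ring

end E

/-- let `f : ℝⁿ → ℝ` be CPWL with exactly `p` affine pieces
`x ↦ ⟨a i, x⟩ + b i`. Set `h(x) = Σ_{i<j} max{⟨a i, x⟩ + b i, ⟨a j, x⟩ + b j}` and
`g = f + h`. Then `g` and `h` are convex CPWL functions with at most `p^{2n+1}` affine
pieces each, and `f = g − h`. -/
theorem decomposition_convex_difference (n p : ℕ) (hp : 0 < p)
    (f : (Fin n → ℝ) → ℝ) (hcpwl : IsCPWL f)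
    (a : Fin p → Fin n → ℝ) (b : Fin p → ℝ)
    (hpieces : ∀ x, ∃ i, f x = (∑ t, a i t * x t) + b i)
    (hmin : ∀ q, PiecesLE n q f → p ≤ q)
    (g h : (Fin n → ℝ) → ℝ)
    (hh : ∀ x, h x = ∑ q ∈ Finset.univ.filter (fun q : Fin p × Fin p => q.1 < q.2),
        max ((∑ t, a q.1 t * x t) + b q.1) ((∑ t, a q.2 t * x t) + b q.2))
    (hg : ∀ x, g x = f x + h x) :
    ConvexOn ℝ Set.univ g ∧ ConvexOn ℝ Set.univ h ∧
      IsCPWL g ∧ IsCPWL h ∧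
      PiecesLE n (p ^ (2 * n + 1)) g ∧ PiecesLE n (p ^ (2 * n + 1)) h ∧
      ∀ x, f x = g x - h x := by
  have hH : h = fun x => ∑ q ∈ pairsF p,
      max (aff (a q.1) (b q.1) x) (aff (a q.2) (b q.2) x) := funext hh
  have hG2 : g = fun x => f x + ∑ q ∈ pairsF p,
      max (aff (a q.1) (b q.1) x) (aff (a q.2) (b q.2) x) := by
    funext x; rw [hg x, hh x]; rfl
  have hpieces' : ∀ x, ∃ i, f x = aff (a i) (b i) x := hpieces
  refine ⟨?_, ?_, ?_, ?_, ?_, ?_, ?_⟩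
  · rw [hG2]; exact gConvexOn a b f hcpwl.1 hpieces'
  · rw [hH]; exact hFun_convexOn a b
  · rw [hG2]; exact gFun_isCPWL a b f hcpwl
  · rw [hH]; exact hFun_isCPWL a b
  · rw [hG2]; exact gFun_piecesLE a b hp f hpieces'
  · rw [hH]; exact hFun_piecesLE a b hp
  · intro x; rw [hg x]; ring
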